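/- Let P ∈ ℝ^{m×n} be an entrywise nonnegative matrix with no zero columns and nonnegative rank rank₊(P) = r. Then there exists ε > 0 such that every entrywise nonnegative matrix N ∈ ℝ^{m×n} with ‖N − P‖ < ε satisfies rank₊(N) ≥ r. (The nonnegative rank is lower semicontinuous at matrices without zero columns: it can only increase in a neighborhood.) -/

import Mathlib

attribute [local instance] Matrix.frobeniusNormedAddCommGroup

/-- The nonnegative rank of a matrix: the smallest `r` such that `M = U * V`
with `U : m × r` and `V : r × n` entrywise nonnegative. -/
noncomputable def nnRank {m n : ℕ} (M : Matrix (Fin m) (Fin n) ℝ) : ℕ :=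
  sInf {r : ℕ | ∃ (U : Matrix (Fin m) (Fin r) ℝ) (V : Matrix (Fin r) (Fin n) ℝ),
    (∀ i k, 0 ≤ U i k) ∧ (∀ k j, 0 ≤ V k j) ∧ M = U * V}

/-- entrywise bound by the Frobenius norm -/
lemma abs_entry_le_frobenius {m n : ℕ} (A : Matrix (Fin m) (Fin n) ℝ) (i : Fin m) (j : Fin n) :
    |A i j| ≤ ‖A‖ := by
  rw [Matrix.frobenius_norm_def, ← Real.sqrt_eq_rpow]
  apply Real.abs_le_sqrt
  calc A i j ^ 2 ≤ ∑ j', ‖A i j'‖ ^ (2:ℝ) := by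
        refine Finset.single_le_sum (f := fun j' => ‖A i j'‖ ^ (2:ℝ))
          (fun j' _ => by positivity) (Finset.mem_univ j) |>.trans_eq' ?_
        rw [Real.rpow_two, Real.norm_eq_abs, sq_abs]
    _ ≤ ∑ i', ∑ j', ‖A i' j'‖ ^ (2:ℝ) :=
        Finset.single_le_sum (f := fun i' => ∑ j', ‖A i' j'‖ ^ (2:ℝ))
          (fun i' _ => by positivity) (Finset.mem_univ i)

/-- if a size-`r` nonnegative factorization exists then `nnRank M ≤ r` -/
lemma nnRank_le {m n r : ℕ} (M : Matrix (Fin m) (Fin n) ℝ)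
    (h : ∃ (U : Matrix (Fin m) (Fin r) ℝ) (V : Matrix (Fin r) (Fin n) ℝ),
      (∀ i k, 0 ≤ U i k) ∧ (∀ k j, 0 ≤ V k j) ∧ M = U * V) : nnRank M ≤ r :=
  Nat.sInf_le h

/-- the defining set of `nnRank` is nonempty for entrywise nonnegative matrices -/
lemma nnRank_set_nonempty {m n : ℕ} (M : Matrix (Fin m) (Fin n) ℝ) (hM : ∀ i j, 0 ≤ M i j) :
    {r : ℕ | ∃ (U : Matrix (Fin m) (Fin r) ℝ) (V : Matrix (Fin r) (Fin n) ℝ),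
      (∀ i k, 0 ≤ U i k) ∧ (∀ k j, 0 ≤ V k j) ∧ M = U * V}.Nonempty := by
  refine ⟨n, M, 1, hM, fun k j => ?_, by simp⟩
  by_cases h : k = j <;> simp [Matrix.one_apply, h]

/-- a factorization of size `s` can be padded to any size `t ≥ s` -/
lemma pad_factorization {m n s t : ℕ} (hst : s ≤ t)
    (U : Matrix (Fin m) (Fin s) ℝ) (V : Matrix (Fin s) (Fin n) ℝ)
    (hU : ∀ i k, 0 ≤ U i k) (hV : ∀ k j, 0 ≤ V k j) :
    ∃ (U' : Matrix (Fin m) (Fin t) ℝ) (V' : Matrix (Fin t) (Fin n) ℝ),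
      (∀ i k, 0 ≤ U' i k) ∧ (∀ k j, 0 ≤ V' k j) ∧ U' * V' = U * V := by
  refine ⟨fun i k => if h : (k : ℕ) < s then U i ⟨k, h⟩ else 0,
          fun k j => if h : (k : ℕ) < s then V ⟨k, h⟩ j else 0, ?_, ?_, ?_⟩
  · intro i k; by_cases h : (k : ℕ) < s <;> simp [h, hU]
  · intro k j; by_cases h : (k : ℕ) < s <;> simp [h, hV]
  · ext i j
    erw [Matrix.mul_apply, Matrix.mul_apply]
    set g : ℕ → ℝ := fun k => if h : k < s then U i ⟨k, h⟩ * V ⟨k, h⟩ j else 0 with hg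
    have h1 : ∑ k : Fin t, (if h : (k : ℕ) < s then U i ⟨k, h⟩ else 0) *
        (if h : (k : ℕ) < s then V ⟨k, h⟩ j else 0) = ∑ k : Fin t, g (k : ℕ) := by
      apply Finset.sum_congr rfl
      intro k _
      by_cases h : (k : ℕ) < s <;> simp [hg, h]
    have h2 : ∑ k : Fin s, U i k * V k j = ∑ k : Fin s, g (k : ℕ) := by
      apply Finset.sum_congr rfl
      intro k _
      simp [hg, k.isLt]
    rw [h1, h2, Fin.sum_univ_eq_sum_range, Fin.sum_univ_eq_sum_range]
    symm
    apply Finset.sum_subset (Finset.range_subset_range.mpr hst)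
    intro k _ hk
    rw [Finset.mem_range, not_lt] at hk
    simp [hg, not_lt_of_ge hk]

/-- Normalization: a nonnegative factorization of a matrix with entries bounded by `C`
can be rescaled so all factor entries are bounded by `√C`. -/
lemma normalize_factorization {m n s : ℕ} (hm : 0 < m) (hn : 0 < n) {C : ℝ}
    (U : Matrix (Fin m) (Fin s) ℝ) (V : Matrix (Fin s) (Fin n) ℝ)
    (hU : ∀ i k, 0 ≤ U i k) (hV : ∀ k j, 0 ≤ V k j)
    (hC : ∀ i j, (U * V) i j ≤ C) :
    ∃ (U' : Matrix (Fin m) (Fin s) ℝ) (V' : Matrix (Fin s) (Fin n) ℝ),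
      (∀ i k, 0 ≤ U' i k ∧ U' i k ≤ Real.sqrt C) ∧
      (∀ k j, 0 ≤ V' k j ∧ V' k j ≤ Real.sqrt C) ∧ U' * V' = U * V := by
  haveI : Nonempty (Fin m) := Fin.pos_iff_nonempty.mp hm
  haveI : Nonempty (Fin n) := Fin.pos_iff_nonempty.mp hn
  set a : Fin s → ℝ := fun k => Finset.univ.sup' Finset.univ_nonempty (fun i => U i k) with ha
  set b : Fin s → ℝ := fun k => Finset.univ.sup' Finset.univ_nonempty (fun j => V k j) with hb
  have hUa : ∀ i k, U i k ≤ a k := by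
    intro i k; simp only [ha]; exact Finset.le_sup' (fun i => U i k) (Finset.mem_univ i)
  have hVb : ∀ k j, V k j ≤ b k := by
    intro k j; simp only [hb]; exact Finset.le_sup' (fun j => V k j) (Finset.mem_univ j)
  have ha0 : ∀ k, 0 ≤ a k := fun k => le_trans (hU (Classical.arbitrary _) k)
    (hUa (Classical.arbitrary _) k)
  have hb0 : ∀ k, 0 ≤ b k := fun k => le_trans (hV k (Classical.arbitrary _))
    (hVb k (Classical.arbitrary _))
  have hab : ∀ k, a k * b k ≤ C := by
    intro k
    obtain ⟨i₀, -, hi₀⟩ := Finset.exists_mem_eq_sup' (Finset.univ_nonempty) (fun i => U i k)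
    obtain ⟨j₀, -, hj₀⟩ := Finset.exists_mem_eq_sup' (Finset.univ_nonempty) (fun j => V k j)
    have : a k * b k = U i₀ k * V k j₀ := by rw [ha, hb]; simp only; rw [hi₀, hj₀]
    rw [this]
    calc U i₀ k * V k j₀ ≤ ∑ k', U i₀ k' * V k' j₀ :=
          Finset.single_le_sum (f := fun k' => U i₀ k' * V k' j₀)
            (fun k' _ => mul_nonneg (hU _ _) (hV _ _)) (Finset.mem_univ k)
      _ = (U * V) i₀ j₀ := (Matrix.mul_apply).symm
      _ ≤ C := hC i₀ j₀
  refine ⟨fun i k => if a k = 0 ∨ b k = 0 then 0 else Real.sqrt (b k / a k) * U i k,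
          fun k j => if a k = 0 ∨ b k = 0 then 0 else Real.sqrt (a k / b k) * V k j,
          ?_, ?_, ?_⟩
  · intro i k
    by_cases h : a k = 0 ∨ b k = 0
    · simp [h, Real.sqrt_nonneg]
    · have h' := not_or.mp h
      have hak : 0 < a k := lt_of_le_of_ne (ha0 k) (Ne.symm h'.1)
      have hbk : 0 < b k := lt_of_le_of_ne (hb0 k) (Ne.symm h'.2)
      simp only [if_neg h]
      constructor
      · exact mul_nonneg (Real.sqrt_nonneg _) (hU i k)
      · calc Real.sqrt (b k / a k) * U i k ≤ Real.sqrt (b k / a k) * a k :=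
              mul_le_mul_of_nonneg_left (hUa i k) (Real.sqrt_nonneg _)
          _ = Real.sqrt (b k / a k) * Real.sqrt (a k ^ 2) := by
              rw [Real.sqrt_sq hak.le]
          _ = Real.sqrt (b k / a k * a k ^ 2) := (Real.sqrt_mul (by positivity) _).symm
          _ = Real.sqrt (a k * b k) := by
              congr 1
              field_simp
          _ ≤ Real.sqrt C := Real.sqrt_le_sqrt (hab k)
  · intro k j
    by_cases h : a k = 0 ∨ b k = 0
    · simp [h, Real.sqrt_nonneg]
    · have h' := not_or.mp h
      have hak : 0 < a k := lt_of_le_of_ne (ha0 k) (Ne.symm h'.1)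
      have hbk : 0 < b k := lt_of_le_of_ne (hb0 k) (Ne.symm h'.2)
      simp only [if_neg h]
      constructor
      · exact mul_nonneg (Real.sqrt_nonneg _) (hV k j)
      · calc Real.sqrt (a k / b k) * V k j ≤ Real.sqrt (a k / b k) * b k :=
              mul_le_mul_of_nonneg_left (hVb k j) (Real.sqrt_nonneg _)
          _ = Real.sqrt (a k / b k) * Real.sqrt (b k ^ 2) := by
              rw [Real.sqrt_sq hbk.le]
          _ = Real.sqrt (a k / b k * b k ^ 2) := (Real.sqrt_mul (by positivity) _).symm
          _ = Real.sqrt (a k * b k) := by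
              congr 1
              field_simp
          _ ≤ Real.sqrt C := Real.sqrt_le_sqrt (hab k)
  · ext i j
    erw [Matrix.mul_apply, Matrix.mul_apply]
    apply Finset.sum_congr rfl
    intro k _
    by_cases h : a k = 0 ∨ b k = 0
    · simp only [if_pos h]
      rcases h with h | h
      · have : U i k = 0 := le_antisymm ((hUa i k).trans h.le) (hU i k)
        simp [this]
      · have : V k j = 0 := le_antisymm ((hVb k j).trans h.le) (hV k j)
        simp [this]
    · have h' := not_or.mp h
      have hak : 0 < a k := lt_of_le_of_ne (ha0 k) (Ne.symm h'.1)
      have hbk : 0 < b k := lt_of_le_of_ne (hb0 k) (Ne.symm h'.2)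
      simp only [if_neg h]
      have : Real.sqrt (b k / a k) * Real.sqrt (a k / b k) = 1 := by
        rw [← Real.sqrt_mul (by positivity)]
        rw [div_mul_div_comm, mul_comm (b k)]
        rw [div_self (by positivity)]
        exact Real.sqrt_one
      calc Real.sqrt (b k / a k) * U i k * (Real.sqrt (a k / b k) * V k j)
          = (Real.sqrt (b k / a k) * Real.sqrt (a k / b k)) * (U i k * V k j) := by ring
        _ = U i k * V k j := by rw [this, one_mul]

/-- matrices with entries in `[0, c]` form a compact set -/
lemma isCompact_entries_Icc {m r : ℕ} (c : ℝ) :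
    IsCompact {U : Matrix (Fin m) (Fin r) ℝ | ∀ i j, U i j ∈ Set.Icc (0:ℝ) c} := by
  have h : IsCompact ((Set.univ.pi fun _ : Fin m => Set.univ.pi fun _ : Fin r =>
      Set.Icc (0:ℝ) c) : Set (Fin m → Fin r → ℝ)) :=
    isCompact_univ_pi fun _ => isCompact_univ_pi fun _ => isCompact_Icc
  have hset : {U : Matrix (Fin m) (Fin r) ℝ | ∀ i j, U i j ∈ Set.Icc (0:ℝ) c} =
      ((Set.univ.pi fun _ : Fin m => Set.univ.pi fun _ : Fin r =>
        Set.Icc (0:ℝ) c) : Set (Fin m → Fin r → ℝ)) := by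
    ext U
    constructor
    · intro hU i _ j _; exact hU i j
    · intro hU i j; exact hU i (Set.mem_univ i) j (Set.mem_univ j)
  rw [hset]; exact h

/-- The nonnegative rank is lower semicontinuous at nonnegative matrices without
zero columns: it can only increase in a small enough neighborhood. -/
theorem nnRank_lower_semicontinuous {m n : ℕ}
    (P : Matrix (Fin m) (Fin n) ℝ) (hP : ∀ i j, 0 ≤ P i j)
    (hcol : ∀ j, ∃ i, P i j ≠ 0) {r : ℕ} (hr : nnRank P = r) :
    ∃ ε > 0, ∀ N : Matrix (Fin m) (Fin n) ℝ,
      (∀ i j, 0 ≤ N i j) → ‖N - P‖ < ε → r ≤ nnRank N := by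
  rcases r with _ | t
  · exact ⟨1, one_pos, fun N _ _ => Nat.zero_le _⟩
  -- r = t + 1 ≥ 1. First, m and n must be positive.
  have hm : 0 < m := by
    by_contra hm
    push_neg at hm
    interval_cases m
    have : nnRank P ≤ 0 := nnRank_le P ⟨fun i => i.elim0, fun k => k.elim0,
      fun i => i.elim0, fun k => k.elim0, by ext i j; exact i.elim0⟩
    omega
  have hn : 0 < n := by
    by_contra hn
    push_neg at hn
    interval_cases n
    have : nnRank P ≤ 0 := nnRank_le P ⟨fun i k => k.elim0, fun k => k.elim0,
      fun i k => k.elim0, fun k => k.elim0, by ext i j; exact j.elim0⟩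
    omega
  set C : ℝ := ‖P‖ + 1 with hCdef
  have hC0 : 0 < C := by positivity
  set c : ℝ := Real.sqrt C with hcdef
  -- the compact set of bounded factorization pairs and its image
  set K : Set (Matrix (Fin m) (Fin t) ℝ × Matrix (Fin t) (Fin n) ℝ) :=
    {U : Matrix (Fin m) (Fin t) ℝ | ∀ i j, U i j ∈ Set.Icc (0:ℝ) c} ×ˢ
    {V : Matrix (Fin t) (Fin n) ℝ | ∀ i j, V i j ∈ Set.Icc (0:ℝ) c} with hK
  have hKcompact : IsCompact K := (isCompact_entries_Icc c).prod (isCompact_entries_Icc c)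
  set T : Set (Matrix (Fin m) (Fin n) ℝ) := (fun p : Matrix (Fin m) (Fin t) ℝ ×
    Matrix (Fin t) (Fin n) ℝ => p.1 * p.2) '' K with hT
  have hTcompact : IsCompact T := hKcompact.image (continuous_fst.matrix_mul continuous_snd)
  have hTclosed : IsClosed T := hTcompact.isClosed
  -- P is not in T
  have hPnotT : P ∉ T := by
    rintro ⟨⟨U, V⟩, ⟨hUK, hVK⟩, hUV⟩
    have : nnRank P ≤ t := nnRank_le P
      ⟨U, V, fun i k => (hUK i k).1, fun k j => (hVK k j).1, hUV.symm⟩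
    omega
  -- get a ball around P disjoint from T
  obtain ⟨ε₀, hε₀, hball⟩ := Metric.isOpen_iff.mp hTclosed.isOpen_compl P hPnotT
  refine ⟨min ε₀ 1, lt_min hε₀ one_pos, fun N hN hNP => ?_⟩
  by_contra hcon
  push_neg at hcon
  have hle : nnRank N ≤ t := Nat.lt_succ_iff.mp hcon
  -- get a factorization of N of size nnRank N
  have hmem := Nat.sInf_mem (nnRank_set_nonempty N hN)
  rw [← nnRank] at hmem
  obtain ⟨U₀, V₀, hU₀, hV₀, hNfac⟩ := hmem
  -- pad it to size t
  obtain ⟨U₁, V₁, hU₁, hV₁, hfac⟩ := pad_factorization hle U₀ V₀ hU₀ hV₀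
  rw [← hNfac] at hfac
  -- entries of N are bounded by C
  have hNC : ∀ i j, (U₁ * V₁) i j ≤ C := by
    intro i j
    rw [hfac]
    refine le_of_lt ?_
    have h1 : N i j - P i j ≤ |(N - P) i j| := by
      rw [Matrix.sub_apply]; exact le_abs_self _
    have h2 : |(N - P) i j| ≤ ‖N - P‖ := abs_entry_le_frobenius _ i j
    have h3 : P i j ≤ ‖P‖ := (le_abs_self _).trans (abs_entry_le_frobenius P i j)
    have h4 : ‖N - P‖ < 1 := lt_of_lt_of_le hNP (min_le_right _ _)
    calc N i j = (N i j - P i j) + P i j := by ring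
      _ ≤ ‖N - P‖ + ‖P‖ := add_le_add (h1.trans h2) h3
      _ < 1 + ‖P‖ := by linarith
      _ = C := by rw [hCdef]; ring
  -- normalize
  obtain ⟨U₂, V₂, hU₂, hV₂, hfac₂⟩ := normalize_factorization hm hn U₁ V₁ hU₁ hV₁ hNC
  rw [hfac] at hfac₂
  -- N belongs to T
  have hNT : N ∈ T := ⟨⟨U₂, V₂⟩, ⟨fun i j => hU₂ i j, fun i j => hV₂ i j⟩, hfac₂⟩
  -- but N is in the ball around P disjoint from T
  have hNball : N ∈ Metric.ball P ε₀ := by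
    rw [Metric.mem_ball, dist_eq_norm]
    exact lt_of_lt_of_le hNP (min_le_left _ _)
  exact hball hNball hNT
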